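/- Let P be a set of roots of L such that the sum of two elements of P belongs to P whenever it is a root, and such that no sum of a nonempty finite family (with repetitions allowed) of elements of P equals zero. Then for every element u of N := Σ_{α∈P} L_α (the sum of the root spaces indexed by P), the adjoint endomorphism ad u : L → L is nilpotent. -/

import Mathlib

open LieModule LieAlgebra

/-- Auxiliary: the set of endpoints of chains of length `k` starting at `χ`, where each step
adds an element of `P` and every intermediate point after the start lies in `W`. -/
def sumChainSet {G : Type*} [Add G] (P W : Set G) : ℕ → G → Set G
  | 0, χ => {χ}
  | (k+1), χ => {χ' | ∃ α ∈ P, χ + α ∈ W ∧ χ' ∈ sumChainSet P W k (χ + α)}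

/-- Every point of `sumChainSet P W k χ` gives rise to a chain of increments from `P`. -/
theorem sumChainSet_chain {G : Type*} [AddCommGroup G] (P W : Set G) :
    ∀ (k : ℕ) (χ χ' : G), χ' ∈ sumChainSet P W k χ →
      ∃ (w : ℕ → G) (a : ℕ → G), w 0 = χ ∧
        ∀ i < k, a i ∈ P ∧ w (i+1) = w i + a i ∧ w (i+1) ∈ W := by
  intro k
  induction k with
  | zero =>
    intro χ χ' _
    exact ⟨fun _ => χ, fun _ => 0, rfl, fun i hi => absurd hi (Nat.not_lt_zero i)⟩
  | succ k ih =>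
    intro χ χ' hχ'
    obtain ⟨α, hαP, hαW, hmem⟩ := hχ'
    obtain ⟨w', a', hw'0, hchain⟩ := ih (χ + α) χ' hmem
    refine ⟨fun i => match i with | 0 => χ | (j+1) => w' j,
      fun i => match i with | 0 => α | (j+1) => a' j, rfl, ?_⟩
    intro i hi
    match i with
    | 0 => exact ⟨hαP, by simp [hw'0], by simpa [hw'0] using hαW⟩
    | (j+1) =>
      obtain ⟨h1, h2, h3⟩ := hchain j (by omega)
      exact ⟨h1, h2, h3⟩

theorem isNilpotent_ad_of_mem_sum_rootSpaces
    {K : Type*} [Field K] [IsAlgClosed K] [CharZero K]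
    {L : Type*} [LieRing L] [LieAlgebra K L] [Module.Finite K L]
    [LieAlgebra.IsKilling K L]
    (H : LieSubalgebra K L) [H.IsCartanSubalgebra]
    (P : Set (H → K))
    (hP : ∀ α ∈ P, α ≠ 0 ∧ rootSpace H α ≠ ⊥)
    (hadd : ∀ α ∈ P, ∀ β ∈ P, α + β ≠ 0 → rootSpace H (α + β) ≠ ⊥ → α + β ∈ P)
    (hsum : ∀ (n : ℕ) (c : Fin (n + 1) → (H → K)),
      (∀ i, c i ∈ P) → ∑ i, c i ≠ 0)
    (u : L) (hu : u ∈ ⨆ α ∈ P, rootSpace H α) :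
    IsNilpotent (LieAlgebra.ad K L u) := by
  classical
  set W : Set (H → K) := {χ | rootSpace H χ ≠ ⊥} with hW
  -- Step A: `ad u` maps the `χ`-root space into the sum of the `(χ + α)`-root spaces, `α ∈ P`.
  have key : ∀ v ∈ (⨆ α ∈ P, rootSpace H α : LieSubmodule K H L),
      ∀ (χ : H → K) (x : L), x ∈ rootSpace H χ →
        ⁅v, x⁆ ∈ (⨆ α ∈ P, rootSpace H (χ + α) : LieSubmodule K H L) := by
    intro v hv
    rw [iSup_subtype'] at hv
    refine LieSubmodule.iSup_induction _ hv
      (motive := fun v => ∀ (χ : H → K) (x : L), x ∈ rootSpace H χ →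
        ⁅v, x⁆ ∈ (⨆ α ∈ P, rootSpace H (χ + α) : LieSubmodule K H L)) ?_ ?_ ?_
    · rintro ⟨α, hα⟩ y hy χ x hx
      have hmem : ⁅y, x⁆ ∈ rootSpace H (χ + α) := by
        rw [add_comm]
        exact lie_mem_genWeightSpace_of_mem_genWeightSpace hy hx
      exact (le_iSup₂ (f := fun α (_ : α ∈ P) => rootSpace H (χ + α)) α hα) hmem
    · intro χ x _; simp
    · intro y z hy hz χ x hx
      rw [add_lie]
      exact add_mem (hy χ x hx) (hz χ x hx)
  -- Step B: iterates of `ad u` land in sums of root spaces indexed by `sumChainSet`.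
  have main : ∀ (k : ℕ) (χ : H → K) (x : L), x ∈ rootSpace H χ →
      ((LieAlgebra.ad K L u) ^ k) x ∈
        (⨆ χ' ∈ sumChainSet P W k χ, rootSpace H χ' : LieSubmodule K H L) := by
    intro k
    induction k with
    | zero =>
      intro χ x hx
      simpa using
        (le_iSup₂ (f := fun χ' (_ : χ' ∈ sumChainSet P W 0 χ) => rootSpace H χ') χ rfl) hx
    | succ k ih =>
      intro χ x hx
      rw [pow_succ, Module.End.mul_apply]
      have hux : (LieAlgebra.ad K L u) x ∈ (⨆ α ∈ P, rootSpace H (χ + α) : LieSubmodule K H L) :=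
        key u hu χ x hx
      rw [iSup_subtype'] at hux
      refine LieSubmodule.iSup_induction _ hux
        (motive := fun y => ((LieAlgebra.ad K L u) ^ k) y ∈
          (⨆ χ' ∈ sumChainSet P W (k+1) χ, rootSpace H χ' : LieSubmodule K H L)) ?_ ?_ ?_
      · rintro ⟨α, hα⟩ y hy
        by_cases hbot : rootSpace H (χ + α) = ⊥
        · rw [hbot, LieSubmodule.mem_bot] at hy
          simp [hy]
        · have hsub : sumChainSet P W k (χ + α) ⊆ sumChainSet P W (k+1) χ :=
            fun χ' hχ' => ⟨α, hα, hbot, hχ'⟩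
          have hle : (⨆ χ' ∈ sumChainSet P W k (χ + α), rootSpace H χ' : LieSubmodule K H L) ≤
              ⨆ χ' ∈ sumChainSet P W (k+1) χ, rootSpace H χ' :=
            biSup_mono (fun χ' h => hsub h)
          exact hle (ih (χ + α) y hy)
      · simp
      · intro y z hy hz
        rw [map_add]
        exact add_mem hy hz
  -- Finiteness of the set of weights.
  have hfin : W.Finite := finite_genWeightSpace_ne_bot K H L
  set n : ℕ := hfin.toFinset.card with hn
  -- Step C: chains of length `n` starting at a weight are impossible.
  have hempty : ∀ χ ∈ W, sumChainSet P W n χ = ∅ := by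
    intro χ hχ
    rw [Set.eq_empty_iff_forall_notMem]
    intro χ' hχ'
    obtain ⟨w, a, hw0, hchain⟩ := sumChainSet_chain P W n χ χ' hχ'
    have hwW : ∀ i ≤ n, w i ∈ W := by
      intro i hi
      match i with
      | 0 => rw [hw0]; exact hχ
      | (j+1) => exact (hchain j (by omega)).2.2
    have hcard : Fintype.card (↥hfin.toFinset) < Fintype.card (Fin (n + 1)) := by
      simp [hn]
    obtain ⟨i, j, hij, hfij⟩ := Fintype.exists_ne_map_eq_of_card_lt
      (fun i : Fin (n + 1) =>
        (⟨w i, hfin.mem_toFinset.mpr (hwW i (by omega))⟩ : ↥hfin.toFinset)) hcard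
    -- wlog i < j
    wlog hlt : (i : ℕ) < (j : ℕ) generalizing i j with Hwlog
    · have hne : (i : ℕ) ≠ (j : ℕ) := fun h => hij (Fin.ext h)
      exact Hwlog j i (Ne.symm hij) hfij.symm (by omega)
    · have hwij : w i = w j := by
        simpa using congrArg Subtype.val hfij
      -- partial sums
      have hpartial : ∀ t : ℕ, (i : ℕ) + t ≤ n →
          w ((i : ℕ) + t) = w i + ∑ m ∈ Finset.range t, a ((i : ℕ) + m) := by
        intro t
        induction t with
        | zero => intro _; simp
        | succ t iht =>
          intro hle
          have h1 := (hchain ((i : ℕ) + t) (by omega)).2.1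
          rw [show (i : ℕ) + (t + 1) = ((i : ℕ) + t) + 1 by omega, h1, iht (by omega),
            Finset.sum_range_succ, add_assoc]
      obtain ⟨d, hd⟩ : ∃ d, (j : ℕ) - (i : ℕ) = d + 1 :=
        ⟨(j : ℕ) - (i : ℕ) - 1, by omega⟩
      have hsum0 : ∑ m ∈ Finset.range (d + 1), a ((i : ℕ) + m) = 0 := by
        have := hpartial ((j : ℕ) - (i : ℕ)) (by omega)
        rw [show (i : ℕ) + ((j : ℕ) - (i : ℕ)) = (j : ℕ) by omega, ← hwij, hd] at this
        exact (left_eq_add.mp this)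
      refine hsum d (fun m : Fin (d + 1) => a ((i : ℕ) + m)) ?_ ?_
      · intro m
        exact (hchain ((i : ℕ) + (m : ℕ)) (by omega)).1
      · rw [Fin.sum_univ_eq_sum_range (fun m => a ((i : ℕ) + m)) (d + 1)]
        exact hsum0
  -- Conclusion: `(ad u) ^ n = 0`.
  refine ⟨n, ?_⟩
  ext x
  have hx : x ∈ (⨆ χ : H → K, rootSpace H χ : LieSubmodule K H L) := by
    rw [iSup_genWeightSpace_eq_top K H L]; trivial
  rw [LinearMap.zero_apply]
  refine LieSubmodule.iSup_induction _ hx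
    (motive := fun x => ((LieAlgebra.ad K L u) ^ n) x = 0) ?_ ?_ ?_
  · intro χ y hy
    by_cases hχ : χ ∈ W
    · have := main n χ y hy
      rw [hempty χ hχ] at this
      simpa using this
    · rw [hW, Set.mem_setOf_eq, not_not] at hχ
      rw [hχ, LieSubmodule.mem_bot] at hy
      simp [hy]
  · simp
  · intro y z hy hz
    rw [map_add, hy, hz, add_zero]
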